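/- Let 𝒮 and 𝒯 be the F-algebra antiautomorphisms of the Racah algebra ℜ with 𝒮: A ↦ B, B ↦ A, C ↦ C, D ↦ D and 𝒯: A ↦ B, B ↦ C, C ↦ A. Then the group homomorphism from the dihedral group D₆ of order 12 to the group of F-linear bijections of ℜ determined by σ ↦ 𝒮 and τ ↦ 𝒯 (well-defined since 𝒮² = id, 𝒯⁶ = id, (𝒮𝒯)² = id) is injective; equivalently, 𝒯 has order exactly 6. -/

import Mathlib

noncomputable section

/-- Generators of the Racah algebra. -/
inductive RGen : Type
  | A | B | C | D

namespace Racah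

variable (F : Type) [Field F]

/-- The free algebra on the generators `A`, `B`, `C`, `D`. -/
abbrev FA := FreeAlgebra F RGen

def fA : FA F := FreeAlgebra.ι F RGen.A
def fB : FA F := FreeAlgebra.ι F RGen.B
def fC : FA F := FreeAlgebra.ι F RGen.C
def fD : FA F := FreeAlgebra.ι F RGen.D

/-- α = [A,D] + AC − BA in the free algebra. -/
def fAl : FA F := (fA F * fD F - fD F * fA F) + fA F * fC F - fB F * fA F
/-- β = [B,D] + BA − CB in the free algebra. -/
def fBe : FA F := (fB F * fD F - fD F * fB F) + fB F * fA F - fC F * fB F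
/-- γ = [C,D] + CB − AC in the free algebra. -/
def fGa : FA F := (fC F * fD F - fD F * fC F) + fC F * fB F - fA F * fC F

/-- The defining relations of the Racah algebra:
`[A,B] = [B,C] = [C,A] = 2D` and each of `α`, `β`, `γ` commutes with each of `A`, `B`, `C`, `D`. -/
inductive Rel : FA F → FA F → Prop
  | AB : Rel (fA F * fB F - fB F * fA F) (2 * fD F)
  | BC : Rel (fB F * fC F - fC F * fB F) (2 * fD F)
  | CA : Rel (fC F * fA F - fA F * fC F) (2 * fD F)
  | cen (c x : FA F) (hc : c = fAl F ∨ c = fBe F ∨ c = fGa F)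
      (hx : x = fA F ∨ x = fB F ∨ x = fC F ∨ x = fD F) :
      Rel (c * x) (x * c)

/-- The Racah algebra ℜ. -/
abbrev R := RingQuot (Rel F)

def A : R F := RingQuot.mkAlgHom F (Rel F) (fA F)
def B : R F := RingQuot.mkAlgHom F (Rel F) (fB F)
def C : R F := RingQuot.mkAlgHom F (Rel F) (fC F)
def D : R F := RingQuot.mkAlgHom F (Rel F) (fD F)

/-- α = [A,D] + AC − BA. -/
def al : R F := (A F * D F - D F * A F) + A F * C F - B F * A F
/-- β = [B,D] + BA − CB. -/
def be : R F := (B F * D F - D F * B F) + B F * A F - C F * B F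
/-- γ = [C,D] + CB − AC. -/
def ga : R F := (C F * D F - D F * C F) + C F * B F - A F * C F
/-- δ = A + B + C. -/
def de : R F := A F + B F + C F

end Racah

namespace Racah

/-- An F-algebra antiautomorphism of ℜ: an F-linear bijection `f` with `f 1 = 1`
and `f (x*y) = f y * f x` for all `x`, `y`. -/
def IsAntiAut (F : Type) [Field F] (f : R F ≃ₗ[F] R F) : Prop :=
  f 1 = 1 ∧ ∀ x y : R F, f (x * y) = f y * f x

end Racah

namespace Racah
variable (F : Type) [Field F]

/-- commutative representation separating A, B, C -/
def g1 : RGen → (F × F × F)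
  | RGen.A => (1, 0, 0)
  | RGen.B => (0, 1, 0)
  | RGen.C => (0, 0, 1)
  | RGen.D => 0

def psi1 : R F →ₐ[F] (F × F × F) :=
  RingQuot.liftAlgHom F ⟨FreeAlgebra.lift F (g1 F), by
    intro x y h
    induction h with
    | AB => simp [fA, fB, fD, g1]
    | BC => simp [fB, fC, fD, g1]
    | CA => simp [fC, fA, fD, g1]
    | cen c x hc hx => simp only [map_mul]; exact mul_comm _ _⟩

open Matrix in
def g2 : RGen → Matrix (Fin 3) (Fin 3) F
  | RGen.A => single 0 1 (2 : F)
  | RGen.B => single 1 2 (1 : F)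
  | RGen.C => -(single 0 1 (2 : F)) - single 1 2 (1 : F)
  | RGen.D => single 0 2 (1 : F)

def psi2 : R F →ₐ[F] Matrix (Fin 3) (Fin 3) F :=
  RingQuot.liftAlgHom F ⟨FreeAlgebra.lift F (g2 F), by
    intro x y h
    induction h with
    | AB =>
        simp [fA, fB, fD, g2, Matrix.single_mul_single_same, Matrix.single_mul_single_of_ne,
          two_mul]
        rw [show (2:F) = 1+1 by norm_num, Matrix.single_add]
    | BC =>
        simp [fB, fC, fD, g2, mul_sub, sub_mul, mul_neg, neg_mul,
          Matrix.single_mul_single_same, Matrix.single_mul_single_of_ne, two_mul]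
        rw [show (2:F) = 1+1 by norm_num, Matrix.single_add]
    | CA =>
        simp [fC, fA, fD, g2, mul_sub, sub_mul, mul_neg, neg_mul,
          Matrix.single_mul_single_same, Matrix.single_mul_single_of_ne, two_mul]
        rw [show (2:F) = 1+1 by norm_num, Matrix.single_add]
    | cen c x hc hx =>
        rcases hc with rfl | rfl | rfl <;> rcases hx with rfl | rfl | rfl | rfl <;>
        simp [fAl, fBe, fGa, fA, fB, fC, fD, g2, mul_sub, sub_mul, mul_neg, neg_mul,
          mul_add, add_mul, Matrix.single_mul_single_same, Matrix.single_mul_single_of_ne]⟩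

end Racah

namespace Racah
variable (F : Type) [Field F]

lemma psi1_A : psi1 F (A F) = (1, 0, 0) := by
  simp [psi1, A, fA, RingQuot.liftAlgHom_mkAlgHom_apply, g1]
lemma psi1_B : psi1 F (B F) = (0, 1, 0) := by
  simp [psi1, B, fB, RingQuot.liftAlgHom_mkAlgHom_apply, g1]
lemma psi1_C : psi1 F (C F) = (0, 0, 1) := by
  simp [psi1, C, fC, RingQuot.liftAlgHom_mkAlgHom_apply, g1]

lemma psi2_A : psi2 F (A F) = Matrix.single 0 1 (2 : F) := by
  simp [psi2, A, fA, RingQuot.liftAlgHom_mkAlgHom_apply, g2]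
lemma psi2_B : psi2 F (B F) = Matrix.single 1 2 (1 : F) := by
  simp [psi2, B, fB, RingQuot.liftAlgHom_mkAlgHom_apply, g2]

lemma hABne : A F ≠ B F := fun h => by
  have := congrArg (psi1 F) h
  rw [psi1_A, psi1_B] at this
  exact one_ne_zero (congrArg Prod.fst this)
lemma hACne : A F ≠ C F := fun h => by
  have := congrArg (psi1 F) h
  rw [psi1_A, psi1_C] at this
  exact one_ne_zero (congrArg Prod.fst this)
lemma hBCne : B F ≠ C F := fun h => by
  have := congrArg (psi1 F) h
  rw [psi1_B, psi1_C] at this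
  exact one_ne_zero (congrArg Prod.fst (congrArg Prod.snd this))

lemma hABBAne (h2 : (2 : F) ≠ 0) : A F * B F ≠ B F * A F := fun h => by
  have := congrArg (psi2 F) h
  rw [map_mul, map_mul, psi2_A, psi2_B,
    Matrix.single_mul_single_same,
    Matrix.single_mul_single_of_ne _ _ _ _ (by decide : (2 : Fin 3) ≠ 0)] at this
  have := congrFun (congrFun this 0) 2
  simp [Matrix.single_apply_same] at this
  exact h2 this

end Racah

open Racah in
/-- the group homomorphism D₆ → (F-linear bijections of ℜ) determined by
σ ↦ 𝒮 and τ ↦ 𝒯 is injective; equivalently, 𝒯 has order exactly 6. -/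
theorem stmt6 (F : Type) [Field F] (h2 : (2 : F) ≠ 0)
    (S T : Racah.R F ≃ₗ[F] Racah.R F)
    (hS : IsAntiAut F S ∧ S (Racah.A F) = Racah.B F ∧ S (Racah.B F) = Racah.A F ∧
      S (Racah.C F) = Racah.C F ∧ S (Racah.D F) = Racah.D F)
    (hT : IsAntiAut F T ∧ T (Racah.A F) = Racah.B F ∧ T (Racah.B F) = Racah.C F ∧
      T (Racah.C F) = Racah.A F)
    (φ : DihedralGroup 6 →* (Racah.R F ≃ₗ[F] Racah.R F))
    (hσ : φ (DihedralGroup.sr (0 : ZMod 6)) = S)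
    (hτ : φ (DihedralGroup.r (1 : ZMod 6)) = T) :
    Function.Injective φ ∧ orderOf T = 6 := by
  obtain ⟨⟨hS1, hSm⟩, hSA, hSB, hSC, hSD⟩ := hS
  obtain ⟨⟨hT1, hTm⟩, hTA, hTB, hTC⟩ := hT
  have hφr : ∀ m : ℕ, φ (DihedralGroup.r (m : ZMod 6)) = T ^ m := by
    intro m
    rw [← DihedralGroup.r_one_pow, map_pow, hτ]
  have hφsr : ∀ m : ℕ, φ (DihedralGroup.sr ((m : ZMod 6))) = S * T ^ m := by
    intro m
    rw [show DihedralGroup.sr ((m : ZMod 6)) =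
      DihedralGroup.sr (0 : ZMod 6) * DihedralGroup.r (m : ZMod 6) by
        rw [DihedralGroup.sr_mul_r, zero_add], map_mul, hσ, hφr]
  have hp : ∀ (m : ℕ) (x : R F), (T ^ (m + 1)) x = T ((T ^ m) x) := by
    intro m x
    rw [pow_succ']
    rfl
  have hinj : Function.Injective φ := by
    rw [injective_iff_map_eq_one]
    intro g hg
    obtain (k | k) := g <;>
      (obtain ⟨v, hv6, rfl⟩ : ∃ v : ℕ, v < 6 ∧ k = (v : ZMod 6) :=
        ⟨k.val, ZMod.val_lt k, (ZMod.natCast_rightInverse k).symm⟩) <;>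
      interval_cases v
    -- r 0
    · rw [show ((0 : ℕ) : ZMod 6) = 0 from by norm_num]
      exact DihedralGroup.one_def.symm
    -- r 1
    · exfalso
      rw [hφr 1] at hg
      have e : (T ^ 1) (A F) = A F := DFunLike.congr_fun hg (A F)
      rw [pow_one, hTA] at e
      exact hABne F e.symm
    -- r 2
    · exfalso
      rw [hφr 2] at hg
      have e : (T ^ 2) (A F) = A F := DFunLike.congr_fun hg (A F)
      rw [show (2 : ℕ) = 1 + 1 from rfl, hp, pow_one, hTA, hTB] at e
      exact hACne F e.symm
    -- r 3
    · exfalso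
      rw [hφr 3] at hg
      have e : (T ^ 3) (A F * B F) = A F * B F := DFunLike.congr_fun hg (A F * B F)
      rw [show (3 : ℕ) = 1 + 1 + 1 from rfl, hp, hp, pow_one,
        hTm, hTA, hTB, hTm, hTB, hTC, hTm, hTC, hTA] at e
      exact hABBAne F h2 e.symm
    -- r 4
    · exfalso
      rw [hφr 4] at hg
      have e : (T ^ 4) (A F) = A F := DFunLike.congr_fun hg (A F)
      rw [show (4 : ℕ) = 1 + 1 + 1 + 1 from rfl, hp, hp, hp, pow_one,
        hTA, hTB, hTC, hTA] at e
      exact hABne F e.symm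
    -- r 5
    · exfalso
      rw [hφr 5] at hg
      have e : (T ^ 5) (A F) = A F := DFunLike.congr_fun hg (A F)
      rw [show (5 : ℕ) = 1 + 1 + 1 + 1 + 1 from rfl, hp, hp, hp, hp, pow_one,
        hTA, hTB, hTC, hTA, hTB] at e
      exact hACne F e.symm
    -- sr 0
    · exfalso
      rw [hφsr 0] at hg
      have e := DFunLike.congr_fun hg (A F)
      have e' : S ((T ^ 0) (A F)) = A F := e
      rw [pow_zero] at e'
      have e'' : S (A F) = A F := e'
      rw [hSA] at e''
      exact hABne F e''.symm
    -- sr 1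
    · exfalso
      rw [hφsr 1] at hg
      have e := DFunLike.congr_fun hg (B F)
      have e' : S ((T ^ 1) (B F)) = B F := e
      rw [pow_one, hTB, hSC] at e'
      exact hBCne F e'.symm
    -- sr 2
    · exfalso
      rw [hφsr 2] at hg
      have e := DFunLike.congr_fun hg (A F)
      have e' : S ((T ^ 2) (A F)) = A F := e
      rw [show (2 : ℕ) = 1 + 1 from rfl, hp, pow_one, hTA, hTB, hSC] at e'
      exact hACne F e'.symm
    -- sr 3
    · exfalso
      rw [hφsr 3] at hg
      have e := DFunLike.congr_fun hg (A F)
      have e' : S ((T ^ 3) (A F)) = A F := e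
      rw [show (3 : ℕ) = 1 + 1 + 1 from rfl, hp, hp, pow_one, hTA, hTB, hTC, hSA] at e'
      exact hABne F e'.symm
    -- sr 4
    · exfalso
      rw [hφsr 4] at hg
      have e := DFunLike.congr_fun hg (B F)
      have e' : S ((T ^ 4) (B F)) = B F := e
      rw [show (4 : ℕ) = 1 + 1 + 1 + 1 from rfl, hp, hp, hp, pow_one,
        hTB, hTC, hTA, hTB, hSC] at e'
      exact hBCne F e'.symm
    -- sr 5
    · exfalso
      rw [hφsr 5] at hg
      have e := DFunLike.congr_fun hg (A F)
      have e' : S ((T ^ 5) (A F)) = A F := e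
      rw [show (5 : ℕ) = 1 + 1 + 1 + 1 + 1 from rfl, hp, hp, hp, hp, pow_one,
        hTA, hTB, hTC, hTA, hTB, hSC] at e'
      exact hACne F e'.symm
  refine ⟨hinj, ?_⟩
  have := orderOf_injective φ hinj (DihedralGroup.r 1)
  rw [hτ, DihedralGroup.orderOf_r_one] at this
  exact this
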